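/- For all integers M, N ≥ 2, the set S_{M,N} of separable states on ℂ^M ⊗ ℂ^N is not a polytope: there is no finite set T of Hermitian (MN)×(MN) complex matrices whose convex hull equals S_{M,N}. -/

import Mathlib

open Matrix
open scoped Kronecker

noncomputable section

/-- `x` is a unit vector in `ℂ^d`. -/
def isUnitVec {d : ℕ} (x : Fin d → ℂ) : Prop := ∑ i, ‖x i‖ ^ 2 = 1

/-- The rank-one projector `x xᴴ`. -/
def outer {d : ℕ} (x : Fin d → ℂ) : Matrix (Fin d) (Fin d) ℂ :=
  Matrix.vecMulVec x (star x)

/-- The set of pure product states `(x xᴴ) ⊗ (y yᴴ)` for unit vectors `x, y`. -/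
def pureProduct (M N : ℕ) : Set (Matrix (Fin M × Fin N) (Fin M × Fin N) ℂ) :=
  {σ | ∃ x : Fin M → ℂ, ∃ y : Fin N → ℂ,
    isUnitVec x ∧ isUnitVec y ∧ σ = outer x ⊗ₖ outer y}

/-- The set of separable states: the convex hull (over ℝ) of the pure product states. -/
def SepStates (M N : ℕ) : Set (Matrix (Fin M × Fin N) (Fin M × Fin N) ℂ) :=
  convexHull ℝ (pureProduct M N)

/- ### Auxiliary material -/

section Aux

open Complex

set_option linter.unusedSectionVars false

variable {I : Type*} [Fintype I] [DecidableEq I]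

/-- generic rank-one projector -/
def outerP (u : I → ℂ) : Matrix I I ℂ := Matrix.vecMulVec u (star u)

/-- view a tuple as an element of Euclidean space -/
def toE (u : I → ℂ) : EuclideanSpace ℂ I := (WithLp.equiv 2 (I → ℂ)).symm u

@[simp] lemma toE_apply (u : I → ℂ) (i : I) : toE u i = u i := rfl

local notation "⟪" x ", " y "⟫" => @inner ℂ _ _ x y

lemma inner_toE (u v : I → ℂ) : ⟪toE u, toE v⟫ = ∑ i, (starRingEnd ℂ) (u i) * v i := by
  simp [toE, PiLp.inner_apply, RCLike.inner_apply]
  exact Finset.sum_congr rfl fun i _ => mul_comm _ _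

lemma norm_toE_one (u : I → ℂ) (hu : ∑ i, ‖u i‖ ^ 2 = 1) : ‖toE u‖ = 1 := by
  rw [EuclideanSpace.norm_eq]
  simp only [toE_apply]
  rw [hu, Real.sqrt_one]

lemma trace_outerP_mul (u v : I → ℂ) :
    Matrix.trace (outerP u * outerP v) = ⟪toE u, toE v⟫ * (starRingEnd ℂ) ⟪toE u, toE v⟫ := by
  have h1 : Matrix.trace (outerP u * outerP v)
      = ∑ i, ∑ k, (u i * (starRingEnd ℂ) (u k)) * (v k * (starRingEnd ℂ) (v i)) := by
    simp [Matrix.trace, Matrix.mul_apply, outerP, Matrix.vecMulVec_apply, Matrix.diag,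
      Pi.star_apply, RCLike.star_def]
  rw [h1, inner_toE]
  rw [map_sum]
  rw [Finset.sum_mul_sum]
  rw [Finset.sum_comm]
  refine Finset.sum_congr rfl fun i _ => Finset.sum_congr rfl fun k _ => ?_
  simp only [_root_.map_mul, RingHomCompTriple.comp_apply, starRingEnd_self_apply,
    RingHom.id_apply]
  ring

/-- The linear functional used to expose pure states, restricted to its real part. -/
def fFun (u : I → ℂ) (A : Matrix I I ℂ) : ℝ := (Matrix.trace (outerP u * A)).re

lemma fFun_outerP (u v : I → ℂ) : fFun u (outerP v) = ‖⟪toE u, toE v⟫‖ ^ 2 := by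
  rw [fFun, trace_outerP_mul, Complex.mul_conj]
  rw [Complex.ofReal_re, Complex.normSq_eq_norm_sq]

lemma fFun_self (u : I → ℂ) (hu : ‖toE u‖ = 1) : fFun u (outerP u) = 1 := by
  rw [fFun_outerP, inner_self_eq_norm_sq_to_K (𝕜 := ℂ), hu]
  norm_num

lemma fFun_sum {ι : Type*} (u : I → ℂ) (t : Finset ι) (w : ι → ℝ) (z : ι → Matrix I I ℂ) :
    fFun u (∑ i ∈ t, w i • z i) = ∑ i ∈ t, w i * fFun u (z i) := by
  have : outerP u * (∑ i ∈ t, w i • z i) = ∑ i ∈ t, w i • (outerP u * z i) := by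
    rw [Finset.mul_sum]
    exact Finset.sum_congr rfl fun i _ => mul_smul_comm _ _ _
  rw [fFun, this, Matrix.trace_sum]
  rw [Complex.re_sum]
  refine Finset.sum_congr rfl fun i _ => ?_
  rw [Matrix.trace_smul]
  simp [fFun, Complex.real_smul]

lemma key_ineq (u v : I → ℂ) (hu : ‖toE u‖ = 1) (hv : ‖toE v‖ = 1) :
    fFun u (outerP v) ≤ 1 ∧ (fFun u (outerP v) = 1 → outerP v = outerP u) := by
  rw [fFun_outerP]
  have hcs : ‖⟪toE u, toE v⟫‖ ≤ 1 := by
    have := norm_inner_le_norm (𝕜 := ℂ) (toE u) (toE v)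
    rwa [hu, hv, one_mul] at this
  constructor
  · calc ‖⟪toE u, toE v⟫‖ ^ 2 ≤ 1 ^ 2 := by
          exact pow_le_pow_left₀ (norm_nonneg _) hcs 2
      _ = 1 := one_pow 2
  · intro h
    have hn : ‖⟪toE u, toE v⟫‖ = 1 := by
      nlinarith [norm_nonneg ⟪toE u, toE v⟫]
    have hu0 : toE u ≠ 0 := by
      intro h0; rw [h0, norm_zero] at hu; exact one_ne_zero hu.symm
    have hv0 : toE v ≠ 0 := by
      intro h0; rw [h0, norm_zero] at hv; exact one_ne_zero hv.symm
    have := (norm_inner_eq_norm_iff (𝕜 := ℂ) hu0 hv0).1 (by rw [hn, hu, hv, one_mul])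
    obtain ⟨r, hr0, hr⟩ := this
    have hrn : ‖r‖ = 1 := by
      have : ‖toE v‖ = ‖r‖ * ‖toE u‖ := by rw [hr, norm_smul]
      rw [hu, hv, mul_one] at this
      exact this.symm
    have hvr : ∀ i, v i = r * u i := by
      intro i
      have := congrFun (congrArg (WithLp.equiv 2 (I → ℂ)) hr) i
      simpa [toE] using this
    have hr1 : r * (starRingEnd ℂ) r = 1 := by
      rw [Complex.mul_conj]
      rw [Complex.normSq_eq_norm_sq, hrn]
      norm_num
    ext i j
    simp only [outerP, Matrix.vecMulVec_apply, Pi.star_apply, RCLike.star_def, hvr]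
    rw [_root_.map_mul]
    calc r * u i * ((starRingEnd ℂ) r * (starRingEnd ℂ) (u j))
        = (r * (starRingEnd ℂ) r) * (u i * (starRingEnd ℂ) (u j)) := by ring
      _ = u i * (starRingEnd ℂ) (u j) := by rw [hr1, one_mul]

lemma comb_max {ι : Type*} (t : Finset ι) (w c : ι → ℝ)
    (hw0 : ∀ i ∈ t, 0 ≤ w i) (hw1 : ∑ i ∈ t, w i = 1)
    (hc : ∀ i ∈ t, c i ≤ 1) (h : ∑ i ∈ t, w i * c i = 1) :
    ∀ i ∈ t, w i = 0 ∨ c i = 1 := by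
  have hz : ∑ i ∈ t, w i * (1 - c i) = 0 := by
    have : ∑ i ∈ t, w i * (1 - c i) = (∑ i ∈ t, w i) - ∑ i ∈ t, w i * c i := by
      rw [← Finset.sum_sub_distrib]
      exact Finset.sum_congr rfl fun i _ => by ring
    rw [this, hw1, h, sub_self]
  have hnn : ∀ i ∈ t, 0 ≤ w i * (1 - c i) := fun i hi =>
    mul_nonneg (hw0 i hi) (by linarith [hc i hi])
  intro i hi
  have := (Finset.sum_eq_zero_iff_of_nonneg hnn).1 hz i hi
  rcases mul_eq_zero.1 this with h' | h'
  · exact Or.inl h'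
  · exact Or.inr (by linarith)

lemma comb_le {ι : Type*} (t : Finset ι) (w c : ι → ℝ)
    (hw0 : ∀ i ∈ t, 0 ≤ w i) (hw1 : ∑ i ∈ t, w i = 1)
    (hc : ∀ i ∈ t, c i ≤ 1) : ∑ i ∈ t, w i * c i ≤ 1 := by
  calc ∑ i ∈ t, w i * c i ≤ ∑ i ∈ t, w i :=
        Finset.sum_le_sum fun i hi => mul_le_of_le_one_right (hw0 i hi) (hc i hi)
    _ = 1 := hw1

end Aux

section Main

variable {M N : ℕ}

/-- the product vector -/
def pv (x : Fin M → ℂ) (y : Fin N → ℂ) : Fin M × Fin N → ℂ := fun p => x p.1 * y p.2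

lemma outer_kron (x : Fin M → ℂ) (y : Fin N → ℂ) :
    outer x ⊗ₖ outer y = outerP (pv x y) := by
  ext ⟨i, j⟩ ⟨k, l⟩
  simp only [outer, outerP, pv, Matrix.kroneckerMap_apply, Matrix.vecMulVec_apply,
    Pi.star_apply, RCLike.star_def, _root_.map_mul]
  ring

lemma pv_unit {x : Fin M → ℂ} {y : Fin N → ℂ} (hx : isUnitVec x) (hy : isUnitVec y) :
    ∑ p : Fin M × Fin N, ‖pv x y p‖ ^ 2 = 1 := by
  rw [isUnitVec] at hx hy
  rw [Fintype.sum_prod_type]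
  have : ∀ i : Fin M, ∑ j : Fin N, ‖pv x y (i, j)‖ ^ 2 = ‖x i‖ ^ 2 * ∑ j, ‖y j‖ ^ 2 := by
    intro i
    rw [Finset.mul_sum]
    exact Finset.sum_congr rfl fun j _ => by simp [pv, norm_mul, mul_pow]
  simp only [this, hy, mul_one]
  exact hx

/-- any separable state has `fFun u` value at most 1, with equality only at `outerP u`. -/
lemma sep_key {u : Fin M × Fin N → ℂ} (hu : ‖toE u‖ = 1)
    {A : Matrix (Fin M × Fin N) (Fin M × Fin N) ℂ} (hA : A ∈ SepStates M N) :
    fFun u A ≤ 1 ∧ (fFun u A = 1 → A = outerP u) := by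
  rw [SepStates, convexHull_eq] at hA
  obtain ⟨ι, t, w, z, hw0, hw1, hz, hc⟩ := hA
  rw [Finset.centerMass_eq_of_sum_1 _ _ hw1] at hc
  have hkey : ∀ i ∈ t, fFun u (z i) ≤ 1 ∧ (fFun u (z i) = 1 → z i = outerP u) := by
    intro i hi
    obtain ⟨x, y, hx, hy, hzi⟩ := hz i hi
    rw [hzi, outer_kron]
    exact key_ineq u (pv x y) hu (norm_toE_one _ (pv_unit hx hy))
  have hfA : fFun u A = ∑ i ∈ t, w i * fFun u (z i) := by
    rw [← hc, fFun_sum]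
  constructor
  · rw [hfA]
    exact comb_le t w _ hw0 hw1 fun i hi => (hkey i hi).1
  · intro h1
    have := comb_max t w (fun i => fFun u (z i)) hw0 hw1 (fun i hi => (hkey i hi).1)
      (by rw [← hfA]; exact h1)
    rw [← hc]
    have : ∀ i ∈ t, w i • z i = w i • outerP u := by
      intro i hi
      rcases this i hi with h' | h'
      · rw [h', zero_smul, zero_smul]
      · rw [(hkey i hi).2 h']
    rw [Finset.sum_congr rfl this, ← Finset.sum_smul, hw1, one_smul]

lemma pp_infinite (M N : ℕ) (hM : 2 ≤ M) (hN : 2 ≤ N) : (pureProduct M N).Infinite := by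
  set a0 : Fin M := ⟨0, by omega⟩ with ha0
  set a1 : Fin M := ⟨1, by omega⟩ with ha1
  set b0 : Fin N := ⟨0, by omega⟩ with hb0
  have hane : a0 ≠ a1 := by simp [ha0, ha1, Fin.ext_iff]
  set xs : ℝ → (Fin M → ℂ) := fun s i =>
    if i = a0 then ((Real.sqrt (1 - s) : ℝ) : ℂ)
    else if i = a1 then ((Real.sqrt s : ℝ) : ℂ) else 0 with hxs
  set yv : Fin N → ℂ := fun j => if j = b0 then 1 else 0 with hyv
  have hyu : isUnitVec yv := by
    rw [isUnitVec]
    simp [hyv, apply_ite]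
  have hxu : ∀ s ∈ Set.Icc (0 : ℝ) 1, isUnitVec (xs s) := by
    rintro s ⟨hs0, hs1⟩
    rw [isUnitVec]
    have hsub : ∑ i, ‖xs s i‖ ^ 2 = ∑ i ∈ ({a0, a1} : Finset (Fin M)), ‖xs s i‖ ^ 2 := by
      refine (Finset.sum_subset (Finset.subset_univ _) fun i _ hi => ?_).symm
      simp only [Finset.mem_insert, Finset.mem_singleton, not_or] at hi
      simp [hxs, hi.1, hi.2]
    rw [hsub, Finset.sum_pair hane]
    have e1 : xs s a0 = ((Real.sqrt (1 - s) : ℝ) : ℂ) := by simp [hxs]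
    have e2 : xs s a1 = ((Real.sqrt s : ℝ) : ℂ) := by simp [hxs, hane.symm]
    rw [e1, e2]
    simp only [Complex.norm_real, Real.norm_eq_abs, sq_abs]
    rw [Real.sq_sqrt (by linarith), Real.sq_sqrt hs0]
    ring
  set g : ℝ → Matrix (Fin M × Fin N) (Fin M × Fin N) ℂ :=
    fun s => outer (xs s) ⊗ₖ outer yv with hg
  have hmem : ∀ s ∈ Set.Icc (0 : ℝ) 1, g s ∈ pureProduct M N := by
    intro s hs
    exact ⟨xs s, yv, hxu s hs, hyu, rfl⟩
  have hentry : ∀ s ∈ Set.Icc (0 : ℝ) 1, g s (a0, b0) (a0, b0) = ((1 - s : ℝ) : ℂ) := by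
    rintro s ⟨hs0, hs1⟩
    simp only [hg, Matrix.kroneckerMap_apply, outer, Matrix.vecMulVec_apply, Pi.star_apply,
      RCLike.star_def]
    simp only [hxs, hyv, if_pos rfl, Complex.conj_ofReal, _root_.map_one, mul_one]
    rw [← Complex.ofReal_mul, Real.mul_self_sqrt (by linarith : (0:ℝ) ≤ 1 - s)]
  have hinj : Set.InjOn g (Set.Icc (0 : ℝ) 1) := by
    intro s hs s' hs' hgs
    have := hentry s hs
    rw [hgs, hentry s' hs'] at this
    have := Complex.ofReal_inj.1 this
    linarith
  have hIcc : (Set.Icc (0 : ℝ) 1).Infinite := Set.Icc_infinite (by norm_num)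
  exact ((hIcc.image hinj).mono (Set.image_subset_iff.2 hmem))

end Main

/-- The set of separable states is not a polytope: it is not the convex hull of any
finite set of Hermitian matrices. -/
theorem sep_not_polytope (M N : ℕ) (hM : 2 ≤ M) (hN : 2 ≤ N) :
    ¬ ∃ T : Finset (Matrix (Fin M × Fin N) (Fin M × Fin N) ℂ),
        (∀ A ∈ T, A.IsHermitian) ∧
        convexHull ℝ (↑T : Set (Matrix (Fin M × Fin N) (Fin M × Fin N) ℂ)) = SepStates M N := by
  rintro ⟨T, -, hT⟩
  have hsub : pureProduct M N ⊆ (↑T : Set _) := by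
    rintro σ ⟨x, y, hx, hy, rfl⟩
    set u := pv x y with hu_def
    have hu : ‖toE u‖ = 1 := norm_toE_one _ (pv_unit hx hy)
    have hmem : (outer x ⊗ₖ outer y) ∈ SepStates M N :=
      subset_convexHull ℝ _ ⟨x, y, hx, hy, rfl⟩
    rw [← hT, convexHull_eq] at hmem
    obtain ⟨ι, t, w, z, hw0, hw1, hz, hc⟩ := hmem
    rw [Finset.centerMass_eq_of_sum_1 _ _ hw1] at hc
    have hself : fFun u (outer x ⊗ₖ outer y) = 1 := by
      rw [outer_kron]; exact fFun_self u hu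
    have hkey : ∀ i ∈ t, fFun u (z i) ≤ 1 ∧ (fFun u (z i) = 1 → z i = outerP u) := by
      intro i hi
      have hzi : z i ∈ SepStates M N := by
        rw [← hT]
        exact subset_convexHull ℝ _ (hz i hi)
      exact sep_key hu hzi
    have hsum : ∑ i ∈ t, w i * fFun u (z i) = 1 := by
      rw [← fFun_sum, hc, hself]
    have hmax := comb_max t w (fun i => fFun u (z i)) hw0 hw1
      (fun i hi => (hkey i hi).1) hsum
    have hex : ∃ i ∈ t, w i ≠ 0 := by
      by_contra h
      push_neg at h
      rw [Finset.sum_eq_zero h] at hw1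
      exact one_ne_zero hw1.symm
    obtain ⟨i, hi, hwi⟩ := hex
    rcases hmax i hi with h' | h'
    · exact absurd h' hwi
    · have hz1 := (hkey i hi).2 h'
      have : outer x ⊗ₖ outer y = z i := by rw [hz1, outer_kron]
      rw [this]
      exact hz i hi
  exact pp_infinite M N hM hN (Set.Finite.subset T.finite_toSet hsub)

end
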